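/- For any subset D of ℤ/mℤ with m odd, there exists ℓ ∈ ℤ/mℤ such that the intersection (D+ℓ) ∩ (-(D+ℓ)) has size at least |D|²/m. -/

import Mathlib

theorem exists_translate_symmetric_inter (m : ℕ) (hm : 0 < m) (hodd : Odd m)
    (D : Finset (ZMod m)) :
    ∃ ℓ : ZMod m,
      (D.card : ℝ) ^ 2 / m ≤ ((D.image (· + ℓ)) ∩ (D.image (fun d => -(d + ℓ)))).card := by
  haveI : NeZero m := ⟨hm.ne'⟩
  obtain ⟨k, hk⟩ := hodd
  set u : ZMod m := ((k + 1 : ℕ) : ZMod m) with hu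
  have h2 : (2 : ZMod m) * u = 1 := by
    have hm1 : 2 * (k + 1) = m + 1 := by omega
    calc (2 : ZMod m) * u = ((2 * (k + 1) : ℕ) : ZMod m) := by rw [hu]; push_cast; ring
      _ = ((m + 1 : ℕ) : ZMod m) := by rw [hm1]
      _ = 1 := by push_cast [ZMod.natCast_self]; ring
  have hset : ∀ ℓ : ZMod m, (D.image (· + ℓ)) ∩ (D.image (fun d => -(d + ℓ)))
      = Finset.univ.filter (fun x => x - ℓ ∈ D ∧ -x - ℓ ∈ D) := by
    intro ℓ
    ext x
    simp only [Finset.mem_inter, Finset.mem_image, Finset.mem_filter, Finset.mem_univ, true_and]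
    constructor
    · rintro ⟨⟨a, ha, rfl⟩, ⟨b, hb, hbx⟩⟩
      constructor
      · simpa using ha
      · have : b = -(a + ℓ) - ℓ := by linear_combination -hbx
        rwa [this] at hb
    · rintro ⟨h1, h2'⟩
      exact ⟨⟨x - ℓ, h1, by ring⟩, ⟨-x - ℓ, h2', by ring⟩⟩
  have hsum : ∑ ℓ : ZMod m, ((D.image (· + ℓ)) ∩ (D.image (fun d => -(d + ℓ)))).card
      = D.card * D.card := by
    simp_rw [hset]
    have step1 : ∑ ℓ : ZMod m, (Finset.univ.filter (fun x => x - ℓ ∈ D ∧ -x - ℓ ∈ D)).card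
        = ((Finset.univ : Finset (ZMod m × ZMod m)).filter
            (fun p => p.2 - p.1 ∈ D ∧ -p.2 - p.1 ∈ D)).card := by
      simp_rw [Finset.card_filter]
      rw [Fintype.sum_prod_type]
    rw [step1]
    rw [← Finset.card_product]
    apply Finset.card_bij' (fun p _ => (p.2 - p.1, -p.2 - p.1))
      (fun q _ => (-(q.1 + q.2) * u, (q.1 - q.2) * u))
    · intro p hp
      simp only [Finset.mem_filter] at hp
      simp only [Finset.mem_product]
      exact ⟨hp.2.1, hp.2.2⟩
    · intro q hq
      simp only [Finset.mem_product] at hq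
      simp only [Finset.mem_filter, Finset.mem_univ, true_and]
      constructor
      · have : (q.1 - q.2) * u - -(q.1 + q.2) * u = q.1 * (2 * u) := by ring
        rw [this, h2, mul_one]; exact hq.1
      · have : -((q.1 - q.2) * u) - -(q.1 + q.2) * u = q.2 * (2 * u) := by ring
        rw [this, h2, mul_one]; exact hq.2
    · intro p hp
      ext
      · show -((p.2 - p.1) + (-p.2 - p.1)) * u = p.1
        have : -((p.2 - p.1) + (-p.2 - p.1)) * u = p.1 * (2 * u) := by ring
        rw [this, h2, mul_one]
      · show ((p.2 - p.1) - (-p.2 - p.1)) * u = p.2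
        have : ((p.2 - p.1) - (-p.2 - p.1)) * u = p.2 * (2 * u) := by ring
        rw [this, h2, mul_one]
    · intro q hq
      ext
      · show (q.1 - q.2) * u - -(q.1 + q.2) * u = q.1
        have : (q.1 - q.2) * u - -(q.1 + q.2) * u = q.1 * (2 * u) := by ring
        rw [this, h2, mul_one]
      · show -((q.1 - q.2) * u) - -(q.1 + q.2) * u = q.2
        have : -((q.1 - q.2) * u) - -(q.1 + q.2) * u = q.2 * (2 * u) := by ring
        rw [this, h2, mul_one]
  by_contra hcon
  push_neg at hcon
  have hlt : ∑ ℓ : ZMod m, (((D.image (· + ℓ)) ∩ (D.image (fun d => -(d + ℓ)))).card : ℝ)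
      < ∑ _ℓ : ZMod m, (D.card : ℝ) ^ 2 / m :=
    Finset.sum_lt_sum_of_nonempty Finset.univ_nonempty (fun ℓ _ => hcon ℓ)
  have hL : ∑ ℓ : ZMod m, (((D.image (· + ℓ)) ∩ (D.image (fun d => -(d + ℓ)))).card : ℝ)
      = (D.card : ℝ) ^ 2 := by
    rw [← Nat.cast_sum, hsum]; push_cast; ring
  have hR : ∑ _ℓ : ZMod m, (D.card : ℝ) ^ 2 / m = (D.card : ℝ) ^ 2 := by
    rw [Finset.sum_const, Finset.card_univ, ZMod.card, nsmul_eq_mul]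
    field_simp [hm.ne']
  rw [hL, hR] at hlt
  exact lt_irrefl _ hlt
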